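/- Suppose a random variable D satisfies E[f(D)] ≥ (α/2)·f⁻(𝟙_OPT − p) and E[f(D)] ≥ β·f⁻(p) for some p ∈ [0,1]^V with p ≤ 𝟙_OPT. Then E[f(D)] ≥ (αβ/(α+2β))·f(OPT). -/

import Mathlib

open MeasureTheory Finset

/-- A set function is submodular. -/
def Submodular {V : Type*} [DecidableEq V] (f : Finset V → ℝ) : Prop :=
  ∀ A B : Finset V, f (A ∪ B) + f (A ∩ B) ≤ f A + f B

/-- The Lovász extension: expectation over a uniform threshold θ ∈ (0,1). -/
noncomputable def lovasz {V : Type*} [Fintype V] [DecidableEq V]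
    (f : Finset V → ℝ) (x : V → ℝ) : ℝ :=
  ∫ θ in Set.Ioo (0:ℝ) 1, f (Finset.univ.filter (fun i => θ ≤ x i))

/-- Characteristic vector of a finite set. -/
def charVec {V : Type*} [DecidableEq V] (S : Finset V) : V → ℝ :=
  fun i => if i ∈ S then 1 else 0

section Aux

variable {V : Type*} [Fintype V] [DecidableEq V]

lemma filterSet_meas (P : ℝ → V → Prop) [∀ θ i, Decidable (P θ i)]
    (hP : ∀ i, MeasurableSet {θ : ℝ | P θ i}) (A : Finset V) :
    MeasurableSet {θ : ℝ | Finset.univ.filter (P θ) = A} := by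
  have h : {θ : ℝ | Finset.univ.filter (P θ) = A}
      = ⋂ i : V, (if i ∈ A then {θ : ℝ | P θ i} else {θ : ℝ | P θ i}ᶜ) := by
    ext θ
    simp only [Set.mem_setOf_eq, Finset.ext_iff, Finset.mem_filter, Finset.mem_univ,
      true_and, Set.mem_iInter]
    constructor
    · intro h i
      by_cases hi : i ∈ A <;> simp [hi, h i]
    · intro h i
      have := h i
      by_cases hi : i ∈ A <;> simp [hi] at this <;> simp [hi, this]
  rw [h]
  exact MeasurableSet.iInter fun i => by
    by_cases hi : i ∈ A <;> simp [hi, hP i, (hP i).compl]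

lemma f_filter_meas (f : Finset V → ℝ) (P : ℝ → V → Prop) [∀ θ i, Decidable (P θ i)]
    (hP : ∀ i, MeasurableSet {θ : ℝ | P θ i}) :
    Measurable (fun θ : ℝ => f (Finset.univ.filter (P θ))) := by
  have h : (fun θ : ℝ => f (Finset.univ.filter (P θ)))
      = fun θ => ∑ A : Finset V,
          Set.indicator {θ : ℝ | Finset.univ.filter (P θ) = A} (fun _ => f A) θ := by
    funext θ
    rw [Finset.sum_eq_single (Finset.univ.filter (P θ))]
    · simp [Set.indicator]
    · intro A _ hA
      simp only [Set.indicator, Set.mem_setOf_eq]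
      rw [if_neg (fun h => hA h.symm)]
    · simp
  rw [h]
  exact Finset.measurable_sum _ fun A _ =>
    measurable_const.indicator (filterSet_meas P hP A)

lemma f_filter_int (f : Finset V → ℝ) (P : ℝ → V → Prop) [∀ θ i, Decidable (P θ i)]
    (hP : ∀ i, MeasurableSet {θ : ℝ | P θ i}) :
    IntegrableOn (fun θ : ℝ => f (Finset.univ.filter (P θ))) (Set.Ioo 0 1) := by
  apply Measure.integrableOn_of_bounded (M := ∑ A : Finset V, |f A|)
  · simp [Real.volume_Ioo]
  · exact ((f_filter_meas f P hP).aestronglyMeasurable)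
  · refine Filter.Eventually.of_forall fun θ => ?_
    simp only [Real.norm_eq_abs]
    exact Finset.single_le_sum (fun A _ => abs_nonneg (f A)) (Finset.mem_univ _)

end Aux

/-- Combining the non-monotone bounds yields an `αβ/(α+2β)` fraction of the optimum. -/
theorem combine_bounds_nonmonotone {V : Type*} [Fintype V] [DecidableEq V]
    (f : Finset V → ℝ) (hsub : Submodular f) (hnn : ∀ A : Finset V, 0 ≤ f A)
    (OPT : Finset V) (α β : ℝ) (hα : 0 < α) (hβ : 0 < β)
    (p : V → ℝ) (hp0 : ∀ e, 0 ≤ p e) (hp1 : ∀ e, p e ≤ charVec OPT e)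
    (ED : ℝ)
    (h1 : α / 2 * lovasz f (fun e => charVec OPT e - p e) ≤ ED)
    (h2 : β * lovasz f p ≤ ED) :
    α * β / (α + 2 * β) * f OPT ≤ ED := by
  set x : V → ℝ := fun e => charVec OPT e - p e with hxdef
  -- measurability of the predicate families
  have hPx : ∀ i, MeasurableSet {θ : ℝ | θ ≤ x i} := fun i => by
    have : {θ : ℝ | θ ≤ x i} = Set.Iic (x i) := rfl
    rw [this]; exact measurableSet_Iic
  have hPp : ∀ i, MeasurableSet {θ : ℝ | θ ≤ p i} := fun i => by
    have : {θ : ℝ | θ ≤ p i} = Set.Iic (p i) := rfl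
    rw [this]; exact measurableSet_Iic
  have hPq : ∀ i, MeasurableSet {θ : ℝ | 1 - θ ≤ p i} := fun i => by
    have : {θ : ℝ | 1 - θ ≤ p i} = Set.Ici (1 - p i) := by
      ext θ; simp only [Set.mem_setOf_eq, Set.mem_Ici]; constructor <;> intro <;> linarith
    rw [this]; exact measurableSet_Ici
  -- integrabilities
  have hint1 : IntegrableOn (fun θ : ℝ => f (Finset.univ.filter (fun i => θ ≤ x i)))
      (Set.Ioo 0 1) := f_filter_int f _ hPx
  have hint2 : IntegrableOn (fun θ : ℝ => f (Finset.univ.filter (fun i => θ ≤ p i)))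
      (Set.Ioo 0 1) := f_filter_int f _ hPp
  have hint3 : IntegrableOn (fun θ : ℝ => f (Finset.univ.filter (fun i => 1 - θ ≤ p i)))
      (Set.Ioo 0 1) := f_filter_int f _ hPq
  -- nonnegativity of the Lovász extensions
  have hL1nn : 0 ≤ lovasz f x :=
    setIntegral_nonneg measurableSet_Ioo fun θ _ => hnn _
  have hL2nn : 0 ≤ lovasz f p :=
    setIntegral_nonneg measurableSet_Ioo fun θ _ => hnn _
  -- reflection: ∫ f(filter (1-θ ≤ p ·)) = lovasz f p
  have hrefl : (∫ θ in Set.Ioo (0:ℝ) 1, f (Finset.univ.filter (fun i => 1 - θ ≤ p i)))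
      = lovasz f p := by
    set h : ℝ → ℝ := fun θ => f (Finset.univ.filter (fun i => θ ≤ p i)) with hdef
    have key : ∀ θ : ℝ,
        Set.indicator (Set.Ioo (0:ℝ) 1) (fun t => h (1 - t)) θ
          = Set.indicator (Set.Ioo (0:ℝ) 1) h (1 - θ) := by
      intro θ
      have hiff : θ ∈ Set.Ioo (0:ℝ) 1 ↔ (1 - θ) ∈ Set.Ioo (0:ℝ) 1 := by
        simp only [Set.mem_Ioo]
        constructor <;> rintro ⟨a, b⟩ <;> constructor <;> linarith
      by_cases hθ : θ ∈ Set.Ioo (0:ℝ) 1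
      · rw [Set.indicator_of_mem hθ, Set.indicator_of_mem (hiff.mp hθ)]
      · rw [Set.indicator_of_notMem hθ,
          Set.indicator_of_notMem (fun hm => hθ (hiff.mpr hm))]
    calc (∫ θ in Set.Ioo (0:ℝ) 1, f (Finset.univ.filter (fun i => 1 - θ ≤ p i)))
        = ∫ θ in Set.Ioo (0:ℝ) 1, h (1 - θ) := rfl
      _ = ∫ θ : ℝ, Set.indicator (Set.Ioo (0:ℝ) 1) (fun t => h (1 - t)) θ :=
          (integral_indicator measurableSet_Ioo).symm
      _ = ∫ θ : ℝ, Set.indicator (Set.Ioo (0:ℝ) 1) h (1 - θ) := by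
          exact integral_congr_ae (Filter.Eventually.of_forall key)
      _ = ∫ θ : ℝ, Set.indicator (Set.Ioo (0:ℝ) 1) h θ :=
          integral_sub_left_eq_self (Set.indicator (Set.Ioo (0:ℝ) 1) h) volume 1
      _ = ∫ θ in Set.Ioo (0:ℝ) 1, h θ := integral_indicator measurableSet_Ioo
      _ = lovasz f p := rfl
  -- pointwise inequality
  have hpt : ∀ θ ∈ Set.Ioo (0:ℝ) 1,
      f OPT ≤ f (Finset.univ.filter (fun i => θ ≤ x i))
        + f (Finset.univ.filter (fun i => 1 - θ ≤ p i)) := by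
    rintro θ ⟨hθ0, hθ1⟩
    set A := Finset.univ.filter (fun i => θ ≤ x i) with hA
    set B := Finset.univ.filter (fun i => 1 - θ ≤ p i) with hB
    have hunion : A ∪ B = OPT := by
      ext i
      simp only [hA, hB, Finset.mem_union, Finset.mem_filter, Finset.mem_univ, true_and]
      by_cases hi : i ∈ OPT
      · have hxi : x i = 1 - p i := by simp [hxdef, charVec, hi]
        simp only [hi, iff_true, hxi]
        rcases le_total (p i) (1 - θ) with h | h
        · left; linarith
        · right; linarith
      · have hpi : p i = 0 := le_antisymm (by simpa [charVec, hi] using hp1 i) (hp0 i)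
        have hxi : x i = 0 := by simp [hxdef, charVec, hi, hpi]
        simp only [hi, iff_false, hxi, hpi]
        push_neg
        constructor <;> linarith
    calc f OPT = f (A ∪ B) := by rw [hunion]
      _ ≤ f (A ∪ B) + f (A ∩ B) := le_add_of_nonneg_right (hnn _)
      _ ≤ f A + f B := hsub A B
  -- main integral inequality
  have hkey : f OPT ≤ lovasz f x + lovasz f p := by
    have hconst : (∫ _θ in Set.Ioo (0:ℝ) 1, f OPT) = f OPT := by
      simp [Real.volume_Ioo]
    have hmono : (∫ _θ in Set.Ioo (0:ℝ) 1, f OPT)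
        ≤ ∫ θ in Set.Ioo (0:ℝ) 1,
            (f (Finset.univ.filter (fun i => θ ≤ x i))
              + f (Finset.univ.filter (fun i => 1 - θ ≤ p i))) := by
      apply setIntegral_mono_on ((integrableOn_const_iff).mpr (Or.inr (by simp [Real.volume_Ioo])))
        (hint1.add hint3) measurableSet_Ioo
      exact hpt
    rw [hconst] at hmono
    rwa [integral_add hint1 hint3, hrefl] at hmono
  -- arithmetic
  have hc : (0:ℝ) < α + 2 * β := by linarith
  rw [div_mul_eq_mul_div, div_le_iff₀ hc]
  nlinarith [mul_le_mul_of_nonneg_left hkey (mul_nonneg hα.le hβ.le),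
    mul_le_mul_of_nonneg_left h1 hβ.le, mul_le_mul_of_nonneg_left h2 hα.le,
    mul_pos hα hβ]
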